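/- Let (E,C) be an adaptable separated graph and let p ∈ I_free be a non-minimal free component with vertex v^p. Let G_p'' be the abelian group with generators x_w, for vertices w ∈ E⁰ with [w] < p, and relations (i) x_w = Σ_{e∈s⁻¹(w)} x_{r(e)} for every w with [w] ∈ I_reg and [w] < p, and (ii) Σ_{j=1}^{g(q,i)} x_{r(β(q,i,j))} = 0 for every q ∈ I_free with q ≤ p and every i = 1,…,k(q). Let G_p' := {a_{v^p} + α : α ∈ M(E,C), a_{v^p} + α ≤ a_{v^p}} with the operation (a_{v^p}+α) ∘ (a_{v^p}+β) := a_{v^p} + (α+β). Then G_p' is an abelian group, and the assignment x_w ↦ a_{v^p} + a_w defines a group isomorphism G_p'' ≅ G_p'. -/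

import Mathlib

/-- A (finitely) separated graph `(E,C)`: a directed graph together with,
for each vertex `v`, a partition `C v` of `s⁻¹(v)` into pairwise disjoint
nonempty finite subsets. -/
structure SepGraph where
  V : Type
  Ed : Type
  s : Ed → V
  r : Ed → V
  C : V → Set (Finset Ed)
  c_src : ∀ v : V, ∀ X ∈ C v, ∀ e ∈ X, s e = v
  c_nonempty : ∀ v : V, ∀ X ∈ C v, X.Nonempty
  c_disjoint : ∀ v : V, ∀ X ∈ C v, ∀ Y ∈ C v, X ≠ Y → Disjoint X Y
  c_cover : ∀ e : Ed, ∃ X ∈ C (s e), e ∈ X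

namespace SepGraph

variable (G : SepGraph)

/-- There is an edge from `v` to `w`. -/
def Edge (v w : G.V) : Prop := ∃ e : G.Ed, G.s e = v ∧ G.r e = w

/-- There is a directed path from `v` to `w`. -/
def Reach : G.V → G.V → Prop := Relation.ReflTransGen G.Edge

/-- Mutual reachability: `v` and `w` lie in the same component, i.e. `[v] = [w]`. -/
def VEquiv (v w : G.V) : Prop := G.Reach v w ∧ G.Reach w v

/-- `[v] ≤ [w]` in the antisymmetrization poset `I` of `E⁰`. -/
def VLe (v w : G.V) : Prop := G.Reach w v

/-- `[v] < [w]` in the antisymmetrization poset `I` of `E⁰`. -/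
def VLt (v w : G.V) : Prop := G.Reach w v ∧ ¬ G.Reach v w

/-- The free commutative monoid `F` on the vertex set `E⁰`. -/
abbrev FreeM := G.V →₀ ℕ

/-- The basis element of `F` corresponding to a vertex. -/
noncomputable def vert (v : G.V) : G.FreeM := Finsupp.single v 1

/-- `r(X) = Σ_{e ∈ X} r(e)` as an element of `F`. -/
noncomputable def rX (X : Finset G.Ed) : G.FreeM := ∑ e ∈ X, Finsupp.single (G.r e) 1

/-- The defining relations of `M(E,C)`: `a_v = Σ_{e ∈ X} a_{r(e)}` for `X ∈ C_v`. -/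
def Rel : G.FreeM → G.FreeM → Prop := fun a b =>
  ∃ v : G.V, ∃ X ∈ G.C v, a = G.vert v ∧ b = G.rX X

/-- The congruence on `F` generated by the defining relations. -/
noncomputable def mCon : AddCon G.FreeM := addConGen G.Rel

/-- The monoid `M(E,C)` of the separated graph `(E,C)`. -/
def M := G.mCon.Quotient

noncomputable instance : AddCommMonoid G.M := inferInstanceAs (AddCommMonoid G.mCon.Quotient)

/-- The generator `a_v` of `M(E,C)`. -/
noncomputable def gen (v : G.V) : G.M := G.mCon.mk' (G.vert v)

end SepGraph

/-- The data witnessing that a separated graph is *adaptable*: the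
antisymmetrization `I` of `E⁰` is finite, it is partitioned into free and
regular elements (with free components reduced to a single vertex `v^p`),
and the conditions of Definition 1.6 of the paper hold.  Here, for
`p ∈ I_reg`, the subgraph `E_p` is the restriction of `E` to the class `p`. -/
structure SepGraph.AdaptableStructure (G : SepGraph) where
  /-- the partition `I = I_free ⊔ I_reg` (a vertex is free if its class is free) -/
  free : G.V → Prop
  /-- `I` is a finite poset -/
  finite_components : Finite (Quot G.VEquiv)
  free_respects : ∀ v w : G.V, G.VEquiv v w → (free v ↔ free w)
  /-- a free component consists of a single vertex `E_p⁰ = {v^p}` -/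
  free_singleton : ∀ v : G.V, free v → ∀ w : G.V, G.VEquiv w v → w = v
  /-- for free `p`, `s⁻¹(v^p) = ∅` iff `p` is minimal in `I` -/
  free_minimal : ∀ v : G.V, free v →
    ((¬ ∃ e : G.Ed, G.s e = v) ↔ ∀ w : G.V, G.Reach v w → G.VEquiv v w)
  /-- for free non-minimal `p`, `C_{v^p} = {X₁,…,X_{k(p)}}` is a finite family -/
  free_C_finite : ∀ v : G.V, free v → (G.C v).Finite
  /-- each `X_i ∈ C_{v^p}` contains exactly one loop `α(p,i)` at `v^p` -/
  free_loop : ∀ v : G.V, free v → ∀ X ∈ G.C v, ∃! e : G.Ed, e ∈ X ∧ G.r e = v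
  /-- the remaining edges `β(p,i,t)` of `X_i` end in strictly smaller components -/
  free_targets : ∀ v : G.V, free v → ∀ X ∈ G.C v, ∀ e ∈ X, G.r e = v ∨ G.VLt (G.r e) v
  /-- `g(p,i) ≥ 1`: there is at least one connector `β(p,i,1)` in each `X_i` -/
  free_beta : ∀ v : G.V, free v → ∀ X ∈ G.C v, ∃ e ∈ X, G.r e ≠ v
  /-- for regular `p` and `w ∈ E_p⁰`, `|C_w| = 1` -/
  reg_unique_C : ∀ w : G.V, ¬ free w → ∃! X : Finset G.Ed, X ∈ G.C w
  /-- for regular `p` and `w ∈ E_p⁰`, `|s_{E_p}⁻¹(w)| ≥ 2` -/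
  reg_two_edges : ∀ w : G.V, ¬ free w → ∃ e₁ e₂ : G.Ed, e₁ ≠ e₂ ∧ G.s e₁ = w ∧ G.s e₂ = w ∧
    G.VEquiv (G.r e₁) w ∧ G.VEquiv (G.r e₂) w
  /-- every edge leaving `w ∈ E_p⁰` stays in `E_p` or goes to some `E_q⁰` with `q < p` -/
  reg_targets : ∀ w : G.V, ¬ free w → ∀ e : G.Ed, G.s e = w →
    G.VEquiv (G.r e) w ∨ G.VLt (G.r e) w

namespace SepGraph

/-- In an adaptable separated graph, a regular vertex emits finitely many edges
(row-finiteness); this allows forming the sum `Σ_{e ∈ s⁻¹(w)}`. -/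
lemma pre_finite (G : SepGraph) (A : G.AdaptableStructure) {w : G.V} (hw : ¬ A.free w) :
    {e : G.Ed | G.s e = w}.Finite := by
  obtain ⟨X, hX, huniq⟩ := A.reg_unique_C w hw
  apply Set.Finite.subset X.finite_toSet
  intro e he
  rw [Set.mem_setOf_eq] at he
  obtain ⟨Y, hY, heY⟩ := G.c_cover e
  rw [he] at hY
  rw [huniq Y hY] at heY
  exact heY

end SepGraph

/-- The relations defining the group `G_p''` for a free prime `p = [v^p]`
(Definition 3.5(1)): generators `x_w` for `[w] < p`; relations
`x_w = Σ_{e ∈ s⁻¹(w)} x_{r(e)}` for regular `[w] < p`, and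
`Σ_{j=1}^{g(q,i)} x_{r(β(q,i,j))} = 0` for free `q ≤ p` and `i = 1,…,k(q)`
(`Y` below is the set of non-loop edges `β(q,i,1),…,β(q,i,g(q,i))` of `X_i ∈ C_{v^q}`). -/
def rels14 (G : SepGraph) (A : G.AdaptableStructure) (v : G.V) :
    Set ({w : G.V // G.VLt w v} →₀ ℤ) :=
  {f | ∃ (w : G.V) (hwv : G.VLt w v) (hw : ¬ A.free w)
        (hwf : ∀ e : G.Ed, G.s e = w → G.VLt (G.r e) v),
      f = Finsupp.single ⟨w, hwv⟩ 1 -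
        ∑ e ∈ (G.pre_finite A hw).toFinset.attach,
          Finsupp.single (⟨G.r e.1, hwf e.1 ((G.pre_finite A hw).mem_toFinset.mp e.2)⟩ :
            {w : G.V // G.VLt w v}) 1}
  ∪ {f | ∃ (u : G.V) (_ : A.free u) (_ : G.Reach v u) (X : Finset G.Ed) (_ : X ∈ G.C u)
        (Y : Finset G.Ed) (_ : Y ⊆ X) (_ : ∀ e ∈ X, (e ∈ Y ↔ G.r e ≠ u))
        (hwf : ∀ e ∈ Y, G.VLt (G.r e) v),
      f = ∑ e ∈ Y.attach,
        Finsupp.single (⟨G.r e.1, hwf e.1 e.2⟩ : {w : G.V // G.VLt w v}) 1}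

/-- The group `G_p''` for a free prime `p = [v^p]`: the abelian group with generators
`x_w` (`[w] < p`) and the relations `rels14`. -/
abbrev Gpp14 (G : SepGraph) (A : G.AdaptableStructure) (v : G.V) : Type :=
  ({w : G.V // G.VLt w v} →₀ ℤ) ⧸ AddSubgroup.closure (rels14 G A v)

/-- The set `G_p' = {a_{v^p} + α : α ∈ M(E,C), a_{v^p} + α ≤ a_{v^p}}`. -/
def Gp' (G : SepGraph) (v : G.V) : Type :=
  {x : G.M // (∃ α : G.M, x = G.gen v + α) ∧ (∃ z : G.M, x + z = G.gen v)}


namespace SepGraph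

variable {G : SepGraph}

/-- The defining relation of `M(E,C)` as an equation between generators. -/
lemma gen_eq_sum {u : G.V} {X : Finset G.Ed} (hX : X ∈ G.C u) :
    G.gen u = ∑ e ∈ X, G.gen (G.r e) := by
  have h : G.mCon (G.vert u) (G.rX X) := AddConGen.Rel.of _ _ ⟨u, X, hX, rfl, rfl⟩
  have h2 : G.gen u = G.mCon.mk' (G.rX X) := by
    show G.mCon.mk' (G.vert u) = G.mCon.mk' (G.rX X)
    exact (@AddCon.eq _ _ G.mCon _ _).mpr h
  rw [h2, rX, map_sum]
  rfl

lemma edge_ge {a b : G.V} (h : G.Edge a b) : ∃ δ, G.gen a = G.gen b + δ := by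
  classical
  obtain ⟨e, hs, hr⟩ := h
  obtain ⟨X, hX, heX⟩ := G.c_cover e
  rw [hs] at hX
  refine ⟨∑ f ∈ X.erase e, G.gen (G.r f), ?_⟩
  rw [gen_eq_sum hX, ← hr, ← Finset.add_sum_erase _ _ heX]

lemma reach_ge {a b : G.V} (h : G.Reach a b) : ∃ δ, G.gen a = G.gen b + δ := by
  induction h with
  | refl => exact ⟨0, (add_zero _).symm⟩
  | tail _ hedge ih =>
      obtain ⟨δ₁, h₁⟩ := ih
      obtain ⟨δ₂, h₂⟩ := edge_ge hedge
      exact ⟨δ₂ + δ₁, by rw [h₁, h₂, add_assoc]⟩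

lemma vlt_mono {u a v : G.V} (h : G.Reach u a) (hu : G.VLt u v) : G.VLt a v :=
  ⟨hu.1.trans h, fun hc => hu.2 (h.trans hc)⟩

lemma vlt_of_vequiv {a u v : G.V} (h : G.VEquiv a u) (ha : G.VLt a v) : G.VLt u v :=
  ⟨ha.1.trans h.1, fun hc => ha.2 (h.1.trans hc)⟩

variable {A : G.AdaptableStructure} {v : G.V}

/-- absorption along paths out of the free vertex `v`. -/
lemma absorb_reach (hv : A.free v) {w : G.V} (h : G.Reach v w) (hw : w ≠ v) :
    ∃ z, G.gen v + G.gen w + z = G.gen v := by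
  classical
  induction h with
  | refl => exact absurd rfl hw
  | @tail m b hvm hedge ih =>
      by_cases hm : m = v
      · subst hm
        obtain ⟨e, hs, hr⟩ := hedge
        obtain ⟨X, hX, heX⟩ := G.c_cover e
        rw [hs] at hX
        obtain ⟨e₀, ⟨he₀X, hre₀⟩, _⟩ := A.free_loop m hv X hX
        have hne : e ≠ e₀ := by
          intro hc; subst hc; rw [hr] at hre₀; exact hw hre₀
        have he' : e ∈ X.erase e₀ := Finset.mem_erase.mpr ⟨hne, heX⟩
        refine ⟨∑ f ∈ (X.erase e₀).erase e, G.gen (G.r f), ?_⟩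
        conv_rhs => rw [gen_eq_sum hX]
        rw [← Finset.add_sum_erase _ _ he₀X, hre₀, ← Finset.add_sum_erase _ _ he', hr,
          add_assoc]
      · obtain ⟨z₁, h₁⟩ := ih hm
        obtain ⟨δ, hδ⟩ := edge_ge hedge
        refine ⟨δ + z₁, ?_⟩
        have : G.gen v + G.gen b + (δ + z₁) = G.gen v + G.gen m + z₁ := by
          rw [hδ]; abel
        rw [this, h₁]

lemma absorb_vlt (hv : A.free v) {w : G.V} (hw : G.VLt w v) :
    ∃ z, G.gen v + G.gen w + z = G.gen v :=
  absorb_reach hv hw.1 (fun hc => hw.2 (hc ▸ Relation.ReflTransGen.refl))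

/-- absorption of the non-loop part of a free relation at any `u` reachable from `v`. -/
lemma absorb_free (hv : A.free v) {u : G.V} {X Y : Finset G.Ed} (hu : A.free u)
    (hr : G.Reach v u) (hX : X ∈ G.C u) (hY : Y ⊆ X)
    (hchar : ∀ e ∈ X, (e ∈ Y ↔ G.r e ≠ u)) :
    G.gen v + ∑ e ∈ Y, G.gen (G.r e) = G.gen v := by
  classical
  obtain ⟨e₀, ⟨he₀X, hre₀⟩, huniq⟩ := A.free_loop u hu X hX
  have hYX : Y = X.erase e₀ := by
    ext e
    rw [Finset.mem_erase]
    constructor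
    · intro he
      refine ⟨fun hc => ?_, hY he⟩
      exact ((hchar e (hY he)).mp he) (hc ▸ hre₀)
    · rintro ⟨hne, heX⟩
      refine (hchar e heX).mpr (fun hc => hne (huniq e ⟨heX, hc⟩))
  have hsum : G.gen u = G.gen u + ∑ e ∈ Y, G.gen (G.r e) := by
    conv_lhs => rw [gen_eq_sum hX]
    rw [← Finset.add_sum_erase _ _ he₀X, hre₀, hYX]
  obtain ⟨δ, hδ⟩ := reach_ge hr
  calc G.gen v + ∑ e ∈ Y, G.gen (G.r e)
      = (G.gen u + ∑ e ∈ Y, G.gen (G.r e)) + δ := by rw [hδ]; abel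
    _ = G.gen u + δ := by rw [← hsum]
    _ = G.gen v := hδ.symm

/-- For a regular vertex, the unique member of `C w` is all of `s⁻¹(w)`. -/
lemma reg_sinv (A : G.AdaptableStructure) {w : G.V} (hw : ¬ A.free w) {X : Finset G.Ed}
    (hX : X ∈ G.C w) : (G.pre_finite A hw).toFinset = X := by
  obtain ⟨X', hX', huniq⟩ := A.reg_unique_C w hw
  have hXX' : X = X' := huniq X hX
  subst hXX'
  ext e
  rw [Set.Finite.mem_toFinset, Set.mem_setOf_eq]
  constructor
  · intro he
    obtain ⟨Y, hY, heY⟩ := G.c_cover e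
    rw [he] at hY
    rw [huniq Y hY] at heY
    exact heY
  · intro he
    exact G.c_src w X hX e he

end SepGraph


section GroupStructure

variable {G : SepGraph} {v : G.V}

private lemma auxAC {M : Type*} [AddCommMonoid M] {xv yv g a b zy zx : M}
    (hx : xv = g + a) (hy : yv = g + b) (hzy : yv + zy = g) (hzx : xv + zx = g) :
    xv + b + (zy + zx) = g := by
  subst hx
  have h1 : g + a + b + (zy + zx) = (yv + zy) + (a + zx) := by rw [hy]; abel
  rw [h1, hzy]
  have h2 : g + (a + zx) = g + a + zx := by abel
  rw [h2, hzx]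

private lemma auxNeg {M : Type*} [AddCommMonoid M] {xv g a zx : M}
    (hx : xv = g + a) (hzx : xv + zx = g) : g + zx + a = g := by
  have h1 : g + zx + a = xv + zx := by rw [hx]; abel
  rw [h1, hzx]

private lemma auxVal {M : Type*} [AddCommMonoid M] {xv yv g a b c : M}
    (hx : xv = g + a) (hy : yv = g + b) (hy' : yv = g + c) :
    xv + c = g + (a + b) := by
  have h1 : g + c = g + b := by rw [← hy', hy]
  calc xv + c = a + (g + c) := by rw [hx]; abel
    _ = a + (g + b) := by rw [h1]
    _ = g + (a + b) := by abel

/-- Addition on `G_p'`: `(a_v + α) + (a_v + β) = a_v + (α + β)`. -/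
noncomputable def gpAdd (x y : Gp' G v) : Gp' G v :=
  ⟨x.1 + Classical.choose y.2.1,
   ⟨Classical.choose x.2.1 + Classical.choose y.2.1,
      auxVal (Classical.choose_spec x.2.1) (Classical.choose_spec y.2.1)
        (Classical.choose_spec y.2.1)⟩,
   ⟨Classical.choose y.2.2 + Classical.choose x.2.2,
      auxAC (Classical.choose_spec x.2.1) (Classical.choose_spec y.2.1)
        (Classical.choose_spec y.2.2) (Classical.choose_spec x.2.2)⟩⟩

noncomputable def gpZero : Gp' G v :=
  ⟨G.gen v, ⟨0, (add_zero _).symm⟩, ⟨0, add_zero _⟩⟩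

noncomputable def gpNeg (x : Gp' G v) : Gp' G v :=
  ⟨G.gen v + Classical.choose x.2.2, ⟨_, rfl⟩,
   ⟨Classical.choose x.2.1,
      auxNeg (Classical.choose_spec x.2.1) (Classical.choose_spec x.2.2)⟩⟩

lemma gpAdd_val {x y : Gp' G v} {α β : G.M} (hx : x.1 = G.gen v + α)
    (hy : y.1 = G.gen v + β) : (gpAdd x y).1 = G.gen v + (α + β) :=
  auxVal hx hy (Classical.choose_spec y.2.1)

lemma gpAdd_assoc (x y z : Gp' G v) : gpAdd (gpAdd x y) z = gpAdd x (gpAdd y z) := by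
  apply Subtype.ext
  have hx := Classical.choose_spec x.2.1
  have hy := Classical.choose_spec y.2.1
  have hz := Classical.choose_spec z.2.1
  rw [gpAdd_val (gpAdd_val hx hy) hz, gpAdd_val hx (gpAdd_val hy hz), add_assoc]

lemma gpAdd_comm (x y : Gp' G v) : gpAdd x y = gpAdd y x := by
  apply Subtype.ext
  have hx := Classical.choose_spec x.2.1
  have hy := Classical.choose_spec y.2.1
  rw [gpAdd_val hx hy, gpAdd_val hy hx, add_comm (Classical.choose x.2.1)]

lemma gpZero_val : (gpZero : Gp' G v).1 = G.gen v + 0 := (add_zero _).symm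

lemma gpAdd_zero (x : Gp' G v) : gpAdd x gpZero = x := by
  apply Subtype.ext
  have hx := Classical.choose_spec x.2.1
  rw [gpAdd_val hx gpZero_val, add_zero, ← hx]

lemma gpZero_add (x : Gp' G v) : gpAdd gpZero x = x := by
  rw [gpAdd_comm]; exact gpAdd_zero x

lemma gpNeg_add_cancel (x : Gp' G v) : gpAdd (gpNeg x) x = gpZero := by
  apply Subtype.ext
  have hx := Classical.choose_spec x.2.1
  have hzx := Classical.choose_spec x.2.2
  have hn : (gpNeg x).1 = G.gen v + Classical.choose x.2.2 := rfl
  rw [gpAdd_val hn hx]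
  show _ = G.gen v
  have e1 : G.gen v + (Classical.choose x.2.2 + Classical.choose x.2.1) =
      G.gen v + Classical.choose x.2.2 + Classical.choose x.2.1 := by abel
  rw [e1]
  exact auxNeg hx hzx

noncomputable instance : Add (Gp' G v) := ⟨gpAdd⟩
noncomputable instance : Zero (Gp' G v) := ⟨gpZero⟩
noncomputable instance : Neg (Gp' G v) := ⟨gpNeg⟩

noncomputable instance : AddCommGroup (Gp' G v) where
  add_assoc := gpAdd_assoc
  add_comm := gpAdd_comm
  zero_add := gpZero_add
  add_zero := gpAdd_zero
  neg_add_cancel := gpNeg_add_cancel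
  nsmul := nsmulRec
  zsmul := zsmulRec

lemma add_val {x y : Gp' G v} {α β : G.M} (hx : x.1 = G.gen v + α)
    (hy : y.1 = G.gen v + β) : (x + y).1 = G.gen v + (α + β) :=
  gpAdd_val hx hy

lemma zero_val : (0 : Gp' G v).1 = G.gen v := rfl

lemma sum_val {ι : Type*} (s : Finset ι) (F : ι → Gp' G v) (a : ι → G.M)
    (h : ∀ i ∈ s, (F i).1 = G.gen v + a i) :
    (∑ i ∈ s, F i).1 = G.gen v + ∑ i ∈ s, a i := by
  classical
  induction s using Finset.induction with
  | empty => simp [zero_val]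
  | @insert i s hi ih =>
      rw [Finset.sum_insert hi, Finset.sum_insert hi]
      exact add_val (h i (Finset.mem_insert_self i s))
        (ih fun j hj => h j (Finset.mem_insert_of_mem hj))

lemma nsmul_val (n : ℕ) {x : Gp' G v} {α : G.M} (hx : x.1 = G.gen v + α) :
    (n • x).1 = G.gen v + n • α := by
  induction n with
  | zero => rw [zero_nsmul, zero_nsmul, zero_val, add_zero]
  | succ n ih =>
      rw [succ_nsmul, succ_nsmul]
      exact add_val ih hx

lemma zsmul_val (n : ℕ) {x : Gp' G v} {α : G.M} (hx : x.1 = G.gen v + α) :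
    ((n : ℤ) • x).1 = G.gen v + n • α := by
  rw [natCast_zsmul]
  exact nsmul_val n hx

end GroupStructure



section Phi

open SepGraph

variable {G : SepGraph} {A : G.AdaptableStructure} {v : G.V}

/-- The element `a_v + a_w` of `G_p'`, for `[w] < p`. -/
noncomputable def gam (hv : A.free v) (w : {w : G.V // G.VLt w v}) : Gp' G v :=
  ⟨G.gen v + G.gen w.1, ⟨_, rfl⟩, absorb_vlt hv w.2⟩

lemma gam_val (hv : A.free v) (w : {w : G.V // G.VLt w v}) :
    (gam hv w).1 = G.gen v + G.gen w.1 := rfl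

/-- The homomorphism from the free abelian group to `G_p'`. -/
noncomputable def Phi0 (hv : A.free v) : ({w : G.V // G.VLt w v} →₀ ℤ) →+ Gp' G v :=
  Finsupp.liftAddHom fun w => zmultiplesHom _ (gam hv w)

lemma Phi0_single (hv : A.free v) (w : {w : G.V // G.VLt w v}) (n : ℤ) :
    Phi0 hv (Finsupp.single w n) = n • gam hv w := by
  rw [Phi0, Finsupp.liftAddHom_apply_single]
  rfl

lemma rels_ker (hv : A.free v) : ∀ f ∈ rels14 G A v, Phi0 hv f = 0 := by
  intro f hf
  rcases hf with hf | hf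
  · obtain ⟨w, hwv, hw, hwf, rfl⟩ := hf
    rw [map_sub, sub_eq_zero, Phi0_single, one_zsmul, map_sum]
    apply Subtype.ext
    have h2 : (∑ e ∈ (G.pre_finite A hw).toFinset.attach,
        Phi0 hv (Finsupp.single
          (⟨G.r e.1, hwf e.1 ((G.pre_finite A hw).mem_toFinset.mp e.2)⟩ :
            {w : G.V // G.VLt w v}) 1)).1 =
        G.gen v + ∑ e ∈ (G.pre_finite A hw).toFinset.attach, G.gen (G.r e.1) := by
      refine sum_val _ _ _ (fun e he => ?_)
      rw [Phi0_single, one_zsmul, gam_val]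
    rw [h2, gam_val]
    rw [Finset.sum_attach _ (fun e => G.gen (G.r e))]
    obtain ⟨X, hX, -⟩ := A.reg_unique_C w hw
    rw [reg_sinv A hw hX]
    rw [← gen_eq_sum hX]
  · obtain ⟨u, hu, hru, X, hX, Y, hYX, hchar, hwf, rfl⟩ := hf
    rw [map_sum]
    apply Subtype.ext
    have h2 : (∑ e ∈ Y.attach,
        Phi0 hv (Finsupp.single (⟨G.r e.1, hwf e.1 e.2⟩ : {w : G.V // G.VLt w v}) 1)).1 =
        G.gen v + ∑ e ∈ Y.attach, G.gen (G.r e.1) := by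
      refine sum_val _ _ _ (fun e he => ?_)
      rw [Phi0_single, one_zsmul, gam_val]
    rw [h2, Finset.sum_attach _ (fun e => G.gen (G.r e))]
    rw [absorb_free hv hu hru hX hYX hchar]
    rfl

/-- The homomorphism `G_p'' → G_p'`. -/
noncomputable def phi1 (hv : A.free v) : Gpp14 G A v →+ Gp' G v :=
  QuotientAddGroup.lift _ (Phi0 hv) (by
    intro f hf
    have hle : AddSubgroup.closure (rels14 G A v) ≤ (Phi0 hv).ker :=
      (AddSubgroup.closure_le _).2 (fun g hg => AddMonoidHom.mem_ker.2 (rels_ker hv g hg))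
    exact AddMonoidHom.mem_ker.1 (hle hf))

lemma phi1_mk (hv : A.free v) (f : {w : G.V // G.VLt w v} →₀ ℤ) :
    phi1 hv (QuotientAddGroup.mk f) = Phi0 hv f := rfl

end Phi


section Theta

open SepGraph

variable {G : SepGraph} {A : G.AdaptableStructure} {v : G.V}

private lemma pair_sum {H : Type*} [AddCommGroup H] {ι : Type*} (s : Finset ι) (g : ι → H) :
    ∑ i ∈ s, ((g i, 0) : H × ℕ) = ((∑ i ∈ s, g i, 0) : H × ℕ) := by
  classical
  induction s using Finset.induction with
  | empty => simp; rfl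
  | @insert i s hi ih =>
      rw [Finset.sum_insert hi, Finset.sum_insert hi, ih, Prod.mk_add_mk, add_zero]

private lemma nsmul_some {β : Type*} [AddMonoid β] (n : ℕ) (a : β) :
    n • (WithTop.some a) = WithTop.some (n • a) := by
  induction n with
  | zero => rw [zero_nsmul, zero_nsmul]; rfl
  | succ n ih =>
      rw [succ_nsmul, succ_nsmul, ih]
      rfl

private lemma nsmul_top' {β : Type*} [AddMonoid β] {n : ℕ} (hn : n ≠ 0) :
    n • (⊤ : WithTop β) = ⊤ := by
  obtain ⟨k, rfl⟩ := Nat.exists_eq_succ_of_ne_zero hn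
  rw [succ_nsmul]
  exact WithTop.add_top _

open Classical in
/-- The vertex weights for the invariant homomorphism `θ`. -/
noncomputable def th0 (A : G.AdaptableStructure) (v : G.V) (u : G.V) :
    WithTop (Gpp14 G A v × ℕ) :=
  if h : G.VLt u v then
    ↑(((QuotientAddGroup.mk (Finsupp.single (⟨u, h⟩ : {w : G.V // G.VLt w v}) (1 : ℤ)) :
        Gpp14 G A v), 0) : Gpp14 G A v × ℕ)
  else if u = v then ↑(((0 : Gpp14 G A v), 1) : Gpp14 G A v × ℕ) else ⊤

/-- The lift of `th0` to the free commutative monoid. -/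
noncomputable def hFm (A : G.AdaptableStructure) (v : G.V) :
    G.FreeM →+ WithTop (Gpp14 G A v × ℕ) :=
  Finsupp.liftAddHom fun u => multiplesHom _ (th0 A v u)

lemma hFm_vert (u : G.V) : hFm A v (G.vert u) = th0 A v u := by
  rw [vert, hFm, Finsupp.liftAddHom_apply_single]
  exact one_nsmul _

lemma hFm_rX (X : Finset G.Ed) : hFm A v (G.rX X) = ∑ e ∈ X, th0 A v (G.r e) := by
  rw [rX, map_sum]
  exact Finset.sum_congr rfl fun e _ => hFm_vert _

lemma mk_rels_zero {f : {w : G.V // G.VLt w v} →₀ ℤ} (hf : f ∈ rels14 G A v) :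
    (QuotientAddGroup.mk f : Gpp14 G A v) = 0 :=
  (QuotientAddGroup.eq_zero_iff _).2 (AddSubgroup.subset_closure hf)

private lemma mk_sum_singles {ι : Type*} (s : Finset ι)
    (g : ι → ({w : G.V // G.VLt w v} →₀ ℤ)) :
    (QuotientAddGroup.mk (∑ i ∈ s, g i) : Gpp14 G A v) =
      ∑ i ∈ s, (QuotientAddGroup.mk (g i) : Gpp14 G A v) := by
  have h := map_sum (QuotientAddGroup.mk' (AddSubgroup.closure (rels14 G A v))) g s
  simpa [QuotientAddGroup.mk'_apply] using h

/-- `θ` respects the defining relations of `M(E,C)`. -/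
lemma hFm_rel (hv : A.free v) : ∀ a b : G.FreeM, G.Rel a b → hFm A v a = hFm A v b := by
  rintro a b ⟨u, X, hX, rfl, rfl⟩
  classical
  rw [hFm_vert, hFm_rX]
  by_cases hfu : A.free u
  · obtain ⟨e₀, he₀, huniq⟩ := A.free_loop u hfu X hX
    by_cases hreach : G.Reach v u
    · set Y := X.erase e₀ with hYdef
      have hYsub : Y ⊆ X := Finset.erase_subset _ _
      have hchar : ∀ e ∈ X, (e ∈ Y ↔ G.r e ≠ u) := by
        intro e heX
        rw [hYdef, Finset.mem_erase]
        constructor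
        · rintro ⟨hne, -⟩ hc
          exact hne (huniq e ⟨heX, hc⟩)
        · intro hne
          exact ⟨fun hc => hne (hc ▸ he₀.2), heX⟩
      have hwf : ∀ e ∈ Y, G.VLt (G.r e) v := by
        intro e heY
        have hne : G.r e ≠ u := (hchar e (hYsub heY)).1 heY
        rcases A.free_targets u hfu X hX e (hYsub heY) with h | h
        · exact absurd h hne
        · exact ⟨hreach.trans h.1, fun hc => h.2 (hc.trans hreach)⟩
      have hf0 : (QuotientAddGroup.mk (∑ e ∈ Y.attach,
          Finsupp.single (⟨G.r e.1, hwf e.1 e.2⟩ : {w : G.V // G.VLt w v}) (1 : ℤ)) :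
            Gpp14 G A v) = 0 :=
        mk_rels_zero (Or.inr ⟨u, hfu, hreach, X, hX, Y, hYsub, hchar, hwf, rfl⟩)
      have hYsum : ∑ e ∈ Y, th0 A v (G.r e) =
          ↑(((QuotientAddGroup.mk (∑ e ∈ Y.attach,
            Finsupp.single (⟨G.r e.1, hwf e.1 e.2⟩ : {w : G.V // G.VLt w v}) (1 : ℤ)) :
              Gpp14 G A v), 0) : Gpp14 G A v × ℕ) := by
        rw [← Finset.sum_attach Y (fun e => th0 A v (G.r e))]
        have hterm : ∀ e ∈ Y.attach, th0 A v (G.r e.1) =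
            ↑(((QuotientAddGroup.mk (Finsupp.single
              (⟨G.r e.1, hwf e.1 e.2⟩ : {w : G.V // G.VLt w v}) (1 : ℤ)) : Gpp14 G A v), 0) :
                Gpp14 G A v × ℕ) := by
          intro e _
          simp only [th0]
          rw [dif_pos (hwf e.1 e.2)]
        rw [Finset.sum_congr rfl hterm, ← WithTop.coe_sum]
        rw [pair_sum, mk_sum_singles]
      calc th0 A v u
          = th0 A v (G.r e₀) + ∑ e ∈ Y, th0 A v (G.r e) := by
            rw [he₀.2, hYsum, hf0]
            rw [Prod.mk_zero_zero, WithTop.coe_zero, add_zero]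
        _ = ∑ e ∈ X, th0 A v (G.r e) :=
            Finset.add_sum_erase X (fun e => th0 A v (G.r e)) he₀.1
    · have hnv : u ≠ v := fun hc => hreach (hc ▸ Relation.ReflTransGen.refl)
      have hnlt : ¬ G.VLt u v := fun h => hreach h.1
      have htop : th0 A v u = ⊤ := by
        simp only [th0]
        rw [dif_neg hnlt, if_neg hnv]
      rw [htop]
      symm
      refine WithTop.sum_eq_top.2 ⟨e₀, he₀.1, ?_⟩
      rw [he₀.2]
      exact htop
  · have hXfin := reg_sinv A hfu hX
    by_cases hlt : G.VLt u v
    · have hwf : ∀ e : G.Ed, G.s e = u → G.VLt (G.r e) v := by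
        intro e hs
        rcases A.reg_targets u hfu e hs with h | h
        · exact vlt_mono h.2 hlt
        · exact ⟨hlt.1.trans h.1, fun hc => h.2 (hc.trans hlt.1)⟩
      have hf0 : (QuotientAddGroup.mk
          (Finsupp.single (⟨u, hlt⟩ : {w : G.V // G.VLt w v}) (1 : ℤ) -
            ∑ e ∈ (G.pre_finite A hfu).toFinset.attach,
              Finsupp.single (⟨G.r e.1,
                hwf e.1 ((G.pre_finite A hfu).mem_toFinset.mp e.2)⟩ :
                  {w : G.V // G.VLt w v}) (1 : ℤ)) : Gpp14 G A v) = 0 :=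
        mk_rels_zero (Or.inl ⟨u, hlt, hfu, hwf, rfl⟩)
      have hkey : (QuotientAddGroup.mk (Finsupp.single (⟨u, hlt⟩ :
          {w : G.V // G.VLt w v}) (1 : ℤ)) : Gpp14 G A v) =
          QuotientAddGroup.mk (∑ e ∈ (G.pre_finite A hfu).toFinset.attach,
            Finsupp.single (⟨G.r e.1,
              hwf e.1 ((G.pre_finite A hfu).mem_toFinset.mp e.2)⟩ :
                {w : G.V // G.VLt w v}) (1 : ℤ)) := by
        have h2 : (QuotientAddGroup.mk' (AddSubgroup.closure (rels14 G A v)))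
            (Finsupp.single (⟨u, hlt⟩ : {w : G.V // G.VLt w v}) (1 : ℤ)) -
            (QuotientAddGroup.mk' (AddSubgroup.closure (rels14 G A v)))
            (∑ e ∈ (G.pre_finite A hfu).toFinset.attach,
              Finsupp.single (⟨G.r e.1,
                hwf e.1 ((G.pre_finite A hfu).mem_toFinset.mp e.2)⟩ :
                  {w : G.V // G.VLt w v}) (1 : ℤ)) = 0 := by
          rw [← map_sub]
          exact hf0
        have h3 := sub_eq_zero.1 h2
        simpa [QuotientAddGroup.mk'_apply] using h3
      have hth0u : th0 A v u = ↑(((QuotientAddGroup.mk (Finsupp.single (⟨u, hlt⟩ :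
          {w : G.V // G.VLt w v}) (1 : ℤ)) : Gpp14 G A v), 0) : Gpp14 G A v × ℕ) := by
        simp only [th0]
        rw [dif_pos hlt]
      have hXsum : ∑ e ∈ X, th0 A v (G.r e) =
          ↑(((QuotientAddGroup.mk (∑ e ∈ (G.pre_finite A hfu).toFinset.attach,
            Finsupp.single (⟨G.r e.1,
              hwf e.1 ((G.pre_finite A hfu).mem_toFinset.mp e.2)⟩ :
                {w : G.V // G.VLt w v}) (1 : ℤ)) : Gpp14 G A v), 0) : Gpp14 G A v × ℕ) := by
        rw [← hXfin, ← Finset.sum_attach (G.pre_finite A hfu).toFinset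
          (fun e => th0 A v (G.r e))]
        have hterm : ∀ e ∈ (G.pre_finite A hfu).toFinset.attach, th0 A v (G.r e.1) =
            ↑(((QuotientAddGroup.mk (Finsupp.single
              (⟨G.r e.1, hwf e.1 ((G.pre_finite A hfu).mem_toFinset.mp e.2)⟩ :
                {w : G.V // G.VLt w v}) (1 : ℤ)) : Gpp14 G A v), 0) :
                  Gpp14 G A v × ℕ) := by
          intro e _
          simp only [th0]
          rw [dif_pos (hwf e.1 ((G.pre_finite A hfu).mem_toFinset.mp e.2))]
        rw [Finset.sum_congr rfl hterm, ← WithTop.coe_sum]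
        rw [pair_sum, mk_sum_singles]
      rw [hth0u, hXsum, hkey]
    · have hnv : u ≠ v := fun hc => hfu (hc ▸ hv)
      have htop : th0 A v u = ⊤ := by
        simp only [th0]
        rw [dif_neg hlt, if_neg hnv]
      obtain ⟨e₁, e₂, hne, hs₁, hs₂, hq₁, hq₂⟩ := A.reg_two_edges u hfu
      have he₁X : e₁ ∈ X := by
        rw [← hXfin, Set.Finite.mem_toFinset]
        exact hs₁
      have hre₁top : th0 A v (G.r e₁) = ⊤ := by
        have h1 : ¬ G.VLt (G.r e₁) v := fun h => hlt (vlt_of_vequiv hq₁ h)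
        have h2 : G.r e₁ ≠ v := by
          intro hc
          apply hfu
          have huv : u = v := A.free_singleton v hv u ⟨(hc ▸ hq₁).2, (hc ▸ hq₁).1⟩
          rw [huv]
          exact hv
        simp only [th0]
        rw [dif_neg h1, if_neg h2]
      rw [htop]
      symm
      exact WithTop.sum_eq_top.2 ⟨e₁, he₁X, hre₁top⟩

/-- The invariant homomorphism `θ : M(E,C) → (G_p'' × ℕ) ∪ {⊤}`. -/
noncomputable def theta (hv : A.free v) : G.M →+ WithTop (Gpp14 G A v × ℕ) :=
  G.mCon.lift (hFm A v)
    (AddCon.addConGen_le.2 fun a b h => (AddCon.ker_rel _).2 (hFm_rel hv a b h))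

lemma theta_gen (hv : A.free v) (u : G.V) : theta hv (G.gen u) = th0 A v u :=
  (AddCon.lift_mk' _ _).trans (hFm_vert u)

lemma th0_v (hv : A.free v) :
    th0 A v v = ↑(((0 : Gpp14 G A v), 1) : Gpp14 G A v × ℕ) := by
  have h : ¬ G.VLt v v := fun h => h.2 h.1
  simp only [th0]
  rw [dif_neg h]
  simp

end Theta


section Tmap

open SepGraph

variable {G : SepGraph} {A : G.AdaptableStructure} {v : G.V}

lemma theta_val (hv : A.free v) (x : Gp' G v) :
    ∃ g : Gpp14 G A v, theta hv x.1 = ↑((g, 1) : Gpp14 G A v × ℕ) ∧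
      ∃ α : G.M, x.1 = G.gen v + α ∧ theta hv α = ↑((g, 0) : Gpp14 G A v × ℕ) := by
  obtain ⟨α, hα⟩ := x.2.1
  obtain ⟨z, hz⟩ := x.2.2
  have hgen : theta hv (G.gen v) = ↑(((0 : Gpp14 G A v), 1) : Gpp14 G A v × ℕ) := by
    rw [theta_gen, th0_v hv]
  have h1 : theta hv x.1 + theta hv z = ↑(((0 : Gpp14 G A v), 1) : Gpp14 G A v × ℕ) := by
    rw [← map_add, hz, hgen]
  have hxne : theta hv x.1 ≠ ⊤ ∧ theta hv z ≠ ⊤ :=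
    WithTop.add_ne_top.1 (by rw [h1]; exact WithTop.coe_ne_top)
  have hx2 : theta hv x.1 = theta hv (G.gen v) + theta hv α := by rw [← map_add, ← hα]
  have hαne : theta hv α ≠ ⊤ := by
    intro hc
    apply hxne.1
    rw [hx2, hc]
    exact WithTop.add_top _
  obtain ⟨p, hp⟩ := WithTop.ne_top_iff_exists.1 hαne
  obtain ⟨q, hq⟩ := WithTop.ne_top_iff_exists.1 hxne.2
  have hx3 : theta hv x.1 = ↑((((0 : Gpp14 G A v), 1) : Gpp14 G A v × ℕ) + p) := by
    rw [hx2, hgen, ← hp, ← WithTop.coe_add]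
  have h4 : ((((0 : Gpp14 G A v), 1) : Gpp14 G A v × ℕ) + p) + q =
      (((0 : Gpp14 G A v), 1) : Gpp14 G A v × ℕ) := by
    have h5 := h1
    rw [hx3, ← hq, ← WithTop.coe_add] at h5
    exact WithTop.coe_inj.1 h5
  have hp2 : p.2 = 0 := by
    have h6 := congrArg Prod.snd h4
    simp only [Prod.snd_add] at h6
    omega
  refine ⟨p.1, ?_, α, hα, ?_⟩
  · rw [hx3]
    congr 1
    refine Prod.ext_iff.2 ⟨by simp, ?_⟩
    simp [hp2]
  · rw [← hp]
    congr 1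
    exact (Prod.ext_iff.2 ⟨rfl, hp2⟩ : p = (p.1, 0))

/-- The inverse invariant `G_p' → G_p''`. -/
noncomputable def Tmap (hv : A.free v) (x : Gp' G v) : Gpp14 G A v :=
  Classical.choose (theta_val hv x)

lemma Tmap_spec (hv : A.free v) (x : Gp' G v) :
    theta hv x.1 = ↑((Tmap hv x, 1) : Gpp14 G A v × ℕ) :=
  (Classical.choose_spec (theta_val hv x)).1

lemma Tmap_spec2 (hv : A.free v) (x : Gp' G v) :
    ∃ α : G.M, x.1 = G.gen v + α ∧ theta hv α = ↑((Tmap hv x, 0) : Gpp14 G A v × ℕ) :=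
  (Classical.choose_spec (theta_val hv x)).2

lemma Tmap_unique (hv : A.free v) {x : Gp' G v} {g : Gpp14 G A v}
    (h : theta hv x.1 = ↑((g, 1) : Gpp14 G A v × ℕ)) : Tmap hv x = g := by
  have h2 := Tmap_spec hv x
  rw [h] at h2
  exact (Prod.ext_iff.1 (WithTop.coe_inj.1 h2)).1.symm

lemma Tmap_add (hv : A.free v) (x y : Gp' G v) :
    Tmap hv (x + y) = Tmap hv x + Tmap hv y := by
  obtain ⟨αx, hαx, hθx⟩ := Tmap_spec2 hv x
  obtain ⟨βy, hβy, hθy⟩ := Tmap_spec2 hv y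
  apply Tmap_unique
  rw [add_val hαx hβy, map_add, map_add, theta_gen, th0_v hv, hθx, hθy,
    ← WithTop.coe_add, ← WithTop.coe_add]
  congr 1
  simp [Prod.ext_iff]

lemma Tmap_gam (hv : A.free v) (w : {w : G.V // G.VLt w v}) :
    Tmap hv (gam hv w) = QuotientAddGroup.mk (Finsupp.single w 1) := by
  apply Tmap_unique
  have h : (gam hv w).1 = G.gen v + G.gen w.1 := rfl
  have h2 : th0 A v w.1 = ↑(((QuotientAddGroup.mk (Finsupp.single w (1 : ℤ)) :
      Gpp14 G A v), 0) : Gpp14 G A v × ℕ) := by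
    simp only [th0]
    rw [dif_pos w.2]
  rw [h, map_add, theta_gen, theta_gen, th0_v hv, h2, ← WithTop.coe_add]
  congr 1
  simp [Prod.ext_iff]

lemma Tphi_id (hv : A.free v) : ∀ a : Gpp14 G A v, Tmap hv (phi1 hv a) = a := by
  let χ : Gpp14 G A v →+ Gpp14 G A v :=
    AddMonoidHom.mk' (fun a => Tmap hv (phi1 hv a)) (fun a b => by
      show Tmap hv (phi1 hv (a + b)) = Tmap hv (phi1 hv a) + Tmap hv (phi1 hv b)
      rw [map_add]
      exact Tmap_add hv _ _)
  have hχ : ∀ a, χ a = Tmap hv (phi1 hv a) := fun a => rfl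
  have hsingle : ∀ w : {w : G.V // G.VLt w v},
      χ (QuotientAddGroup.mk (Finsupp.single w 1)) =
        QuotientAddGroup.mk (Finsupp.single w 1) := by
    intro w
    rw [hχ, phi1_mk, Phi0_single, one_zsmul]
    exact Tmap_gam hv w
  have hall : ∀ f : {w : G.V // G.VLt w v} →₀ ℤ,
      χ (QuotientAddGroup.mk f) = QuotientAddGroup.mk f := by
    intro f
    refine Finsupp.induction f ?_ ?_
    · have h0 : (QuotientAddGroup.mk (0 : {w : G.V // G.VLt w v} →₀ ℤ) :
          Gpp14 G A v) = 0 := rfl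
      rw [h0, map_zero]
    · intro w n f hw hn ih
      have hmk : (QuotientAddGroup.mk (Finsupp.single w n + f) : Gpp14 G A v) =
          QuotientAddGroup.mk (Finsupp.single w n) + QuotientAddGroup.mk f := rfl
      rw [hmk, map_add, ih]
      congr 1
      have hsm : Finsupp.single w n = n • Finsupp.single w (1 : ℤ) := by
        rw [Finsupp.smul_single, smul_eq_mul, mul_one]
      have hmk2 : (QuotientAddGroup.mk (n • Finsupp.single w (1 : ℤ)) : Gpp14 G A v) =
          n • QuotientAddGroup.mk (Finsupp.single w (1 : ℤ)) := by
        rw [← QuotientAddGroup.mk'_apply, map_zsmul, QuotientAddGroup.mk'_apply]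
      rw [hsm, hmk2, map_zsmul, hsingle]
  intro a
  obtain ⟨f, rfl⟩ := QuotientAddGroup.mk_surjective a
  exact hall f

lemma phi1_surjective (hv : A.free v) : Function.Surjective (phi1 hv) := by
  classical
  intro x
  obtain ⟨g, hg, α, hα, hθα⟩ := theta_val hv x
  obtain ⟨c, hc⟩ := AddCon.mk'_surjective (c := G.mCon) α
  have hθc : theta hv (G.mCon.mk' c) = hFm A v c := AddCon.lift_mk' _ _
  have hFc : hFm A v c = ∑ u ∈ c.support, (c u) • th0 A v u := by
    rw [hFm, Finsupp.liftAddHom_apply]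
    rfl
  let π : WithTop (Gpp14 G A v × ℕ) →+ WithTop ℕ :=
    (AddMonoidHom.snd (Gpp14 G A v) ℕ).withTopMap
  have hπα : π (theta hv α) = (0 : WithTop ℕ) := by
    rw [hθα]
    simp [π]
  have hsum0 : ∑ u ∈ c.support, π ((c u) • th0 A v u) = (0 : WithTop ℕ) := by
    rw [← map_sum, ← hFc, ← hθc, hc, hπα]
  have hsupp : ∀ u ∈ c.support, G.VLt u v := by
    intro u hu
    by_contra hnv
    have hcu : c u ≠ 0 := Finsupp.mem_support_iff.1 hu
    have hle : π ((c u) • th0 A v u) ≤ (0 : WithTop ℕ) := by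
      rw [← hsum0]
      exact Finset.single_le_sum (f := fun u' => π ((c u') • th0 A v u'))
        (fun i _ => zero_le) hu
    by_cases huv : u = v
    · have hth : th0 A v u = ↑(((0 : Gpp14 G A v), 1) : Gpp14 G A v × ℕ) := by
        rw [huv]
        exact th0_v hv
      have hπ1 : π (↑(((0 : Gpp14 G A v), 1) : Gpp14 G A v × ℕ)) = WithTop.some (1 : ℕ) := by
        simp [π]
      rw [hth, map_nsmul, hπ1, nsmul_some] at hle
      have h2 : c u • (1 : ℕ) ≤ 0 := WithTop.coe_le_coe.1 hle
      rw [smul_eq_mul, mul_one] at h2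
      exact hcu (Nat.le_zero.1 h2)
    · have hth : th0 A v u = ⊤ := by
        simp only [th0]
        rw [dif_neg hnv, if_neg huv]
      have hπtop : π (⊤ : WithTop (Gpp14 G A v × ℕ)) = ⊤ := by simp [π]
      rw [hth, nsmul_top' hcu, hπtop] at hle
      simp at hle
  refine ⟨QuotientAddGroup.mk (∑ u ∈ c.support.attach,
    Finsupp.single (⟨u.1, hsupp u.1 u.2⟩ : {w : G.V // G.VLt w v}) ((c u.1 : ℤ))), ?_⟩
  apply Subtype.ext
  rw [phi1_mk, map_sum]
  have hval : (∑ u ∈ c.support.attach, Phi0 hv (Finsupp.single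
      (⟨u.1, hsupp u.1 u.2⟩ : {w : G.V // G.VLt w v}) ((c u.1 : ℤ)))).1 =
      G.gen v + ∑ u ∈ c.support.attach, (c u.1) • G.gen u.1 := by
    refine sum_val _ _ _ (fun u hu => ?_)
    rw [Phi0_single]
    exact zsmul_val (c u.1) (gam_val hv _)
  rw [hval, Finset.sum_attach c.support (fun u => (c u) • G.gen u), hα, ← hc]
  congr 1
  have hc2 : c = ∑ u ∈ c.support, Finsupp.single u (c u) := (Finsupp.sum_single c).symm
  have hmk : G.mCon.mk' c = ∑ u ∈ c.support, (c u) • G.gen u := by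
    conv_lhs => rw [hc2]
    rw [map_sum]
    refine Finset.sum_congr rfl (fun u hu => ?_)
    have hsm : Finsupp.single u (c u) = (c u) • Finsupp.single u (1 : ℕ) := by
      rw [Finsupp.smul_single, smul_eq_mul, mul_one]
    rw [hsm, map_nsmul]
    rfl
  exact hmk.symm

end Tmap

/-- For an adaptable separated graph `(E,C)` and a non-minimal free
prime `p = [v^p]`, the set `G_p'` is an abelian group under the operation
`(a_{v^p}+α) ∘ (a_{v^p}+β) = a_{v^p} + (α+β)`, and `x_w ↦ a_{v^p} + a_w` defines a
group isomorphism `G_p'' ≅ G_p'`. -/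
theorem stmt14 (G : SepGraph) (A : G.AdaptableStructure) (v : G.V) (hv : A.free v)
    (hnm : ∃ w : G.V, G.VLt w v) :
    ∃ (op : Gp' G v → Gp' G v → Gp' G v) (e : Gp' G v) (inv : Gp' G v → Gp' G v),
      (∀ (x y : Gp' G v) (α β : G.M), x.1 = G.gen v + α → y.1 = G.gen v + β →
        (op x y).1 = G.gen v + (α + β)) ∧
      (∀ x y z : Gp' G v, op (op x y) z = op x (op y z)) ∧
      (∀ x y : Gp' G v, op x y = op y x) ∧
      (∀ x : Gp' G v, op x e = x) ∧
      (∀ x : Gp' G v, op x (inv x) = e) ∧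
      ∃ φ : Gpp14 G A v → Gp' G v, Function.Bijective φ ∧
        (∀ a b : Gpp14 G A v, φ (a + b) = op (φ a) (φ b)) ∧
        ∀ (w : G.V) (hw : G.VLt w v),
          (φ (QuotientAddGroup.mk (Finsupp.single ⟨w, hw⟩ 1))).1 = G.gen v + G.gen w := by
  refine ⟨(· + ·), 0, Neg.neg, ?_, ?_, ?_, ?_, ?_, ?_⟩
  · exact fun x y α β hx hy => add_val hx hy
  · exact fun x y z => add_assoc x y z
  · exact fun x y => add_comm x y
  · exact fun x => add_zero x
  · exact fun x => add_neg_cancel x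
  · refine ⟨⇑(phi1 hv), ⟨?_, phi1_surjective hv⟩, ?_, ?_⟩
    · intro a b h
      rw [← Tphi_id hv a, ← Tphi_id hv b, h]
    · exact fun a b => map_add _ a b
    · intro w hw
      rw [phi1_mk, Phi0_single, one_zsmul]
      rfl
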